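/- Let R be a commutative semilocal ring and x ∈ R. If the cyclic R-module Rx is cyclically presented, i.e., Rx ≅ R/I for some principal ideal I of R, then the annihilator Ann(x) is a principal ideal of R. -/
import Mathlib

/-- Over a commutative semilocal ring, if `Rx` is cyclically presented then
`Ann(x)` is a principal ideal. -/
theorem stmt_1 (R : Type*) [CommRing R]
    (hsemilocal : {I : Ideal R | I.IsMaximal}.Finite) (x : R)
    (hcp : ∃ a : R,
      Nonempty ((Ideal.span {x} : Ideal R) ≃ₗ[R] (R ⧸ Ideal.span {a}))) :
    (Ideal.torsionOf R R x).IsPrincipal := by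
  obtain ⟨a, ⟨e⟩⟩ := hcp
  have e2 : (R ⧸ Ideal.torsionOf R R x) ≃ₗ[R] (R ⧸ Ideal.span {a}) :=
    (Ideal.quotTorsionOfEquivSpanSingleton R R x).trans e
  have h : Ideal.torsionOf R R x = Ideal.span {a} := by
    rw [← Ideal.annihilator_quotient (I := Ideal.torsionOf R R x),
        ← Ideal.annihilator_quotient (I := Ideal.span {a}), e2.annihilator_eq]
  exact h ▸ ⟨a, rfl⟩
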